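/- Let (Ω,ℱ) be a measurable space and w=(w¹,…,wⁿ):Ω→ℝⁿ measurable such that for every α∈ℝⁿ with nonnegative entries, if α·w(ω)≥0 for all ω∈Ω, then α·w(ω)=0 for all ω∈Ω. Let Π be the set of probability measures π on (Ω,ℱ) with ∫|wⁱ|dπ<∞ and ∫wⁱdπ≤0 for i=1,…,n. Then for any measurable f:Ω→ℝ that is π-integrable for every π∈Π, one has sup_{π∈Π}∫f dπ = inf{x∈ℝ : there exists α∈ℝⁿ with nonnegative entries such that x+α·w(ω) ≥ f(ω) for all ω∈Ω}, and the infimum is attained whenever it is finite. -/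

import Mathlib

open MeasureTheory Set Filter

open Pointwise

noncomputable section

lemma clm_decomp {d : Type*} [Fintype d] [DecidableEq d] (f : (d → ℝ) →L[ℝ] ℝ) (v : d → ℝ) :
    f v = ∑ j, v j * f (Pi.single j 1) := by
  have hv : v = ∑ i, v i • (Pi.single i 1 : d → ℝ) := by
    conv_lhs => rw [pi_eq_sum_univ v]
    refine Finset.sum_congr rfl fun i _ => ?_
    congr 1
    ext j
    simp [Pi.single_apply, eq_comm]
  conv_lhs => rw [hv]
  rw [map_sum]
  refine Finset.sum_congr rfl fun i _ => ?_
  rw [_root_.map_smul]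
  simp [smul_eq_mul]

lemma convex_dense_eq_univ {V : Type*} [NormedAddCommGroup V] [NormedSpace ℝ V]
    [FiniteDimensional ℝ V] {s : Set V} (hs : Convex ℝ s) (hd : closure s = univ) :
    s = univ := by
  have hspan : affineSpan ℝ s = ⊤ := by
    have hcl : IsClosed (affineSpan ℝ s : Set V) :=
      (affineSpan ℝ s).closed_of_finiteDimensional
    have hsub : closure s ⊆ (affineSpan ℝ s : Set V) :=
      hcl.closure_subset_iff.2 (subset_affineSpan ℝ s)
    rw [hd] at hsub
    exact (AffineSubspace.coe_eq_univ_iff _).1 (eq_univ_of_univ_subset hsub)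
  obtain ⟨u, hu⟩ := hs.interior_nonempty_iff_affineSpan_eq_top.2 hspan
  apply eq_univ_of_forall
  intro x
  have hy : (2 : ℝ) • x - u ∈ closure s := by rw [hd]; trivial
  have hseg := hs.openSegment_interior_closure_subset_interior hu hy
  have hxseg : x ∈ openSegment ℝ u ((2:ℝ) • x - u) := by
    refine ⟨1/2, 1/2, by norm_num, by norm_num, by norm_num, ?_⟩
    rw [smul_sub]
    module
  exact interior_subset (hseg hxseg)

lemma sep_lemma {d : Type*} [Fintype d] {C : Set (d → ℝ)} (hC : Convex ℝ C)
    (hne : C.Nonempty) (h0 : (0 : d → ℝ) ∉ C) :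
    ∃ φ : d → ℝ, φ ≠ 0 ∧ ∀ c ∈ C, 0 ≤ ∑ j, φ j * c j := by
  classical
  set S : Set (d → ℝ) := (hC.toCone C : Set (d → ℝ)) with hS
  have hSconv : Convex ℝ S := (hC.toCone C).convex
  have hCS : C ⊆ S := hC.subset_toCone
  have h0S : (0 : d → ℝ) ∉ S := by
    intro h
    obtain ⟨c, hc, y, hy, hcy⟩ := hC.mem_toCone.1 h
    rcases smul_eq_zero.1 hcy with h | h
    · exact absurd h hc.ne'
    · exact h0 (h ▸ hy)
  have hclne : closure S ≠ univ := by
    intro h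
    exact h0S ((convex_dense_eq_univ hSconv h) ▸ trivial)
  obtain ⟨z, hz⟩ : ∃ z, z ∉ closure S := by
    by_contra h
    push_neg at h
    exact hclne (eq_univ_of_forall h)
  obtain ⟨f, u, hfu, huz⟩ :=
    geometric_hahn_banach_closed_point hSconv.closure isClosed_closure hz
  obtain ⟨c₀, hc₀⟩ := hne
  have h0cl : (0 : d → ℝ) ∈ closure S := by
    have h1 : Tendsto (fun k : ℕ => ((k:ℝ)+1)⁻¹ • c₀) atTop (nhds 0) := by
      have h2 : Tendsto (fun k : ℕ => ((k:ℝ)+1)⁻¹) atTop (nhds 0) :=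
        tendsto_one_div_add_atTop_nhds_zero_nat.congr (by intro k; rw [one_div])
      simpa using h2.smul_const c₀
    refine mem_closure_of_tendsto h1 (Eventually.of_forall fun k => ?_)
    exact (hC.toCone C).smul_mem (by positivity) (hCS hc₀)
  have hu0 : 0 < u := by simpa using hfu 0 h0cl
  have hfC : ∀ c ∈ C, f c ≤ 0 := by
    intro c hc
    by_contra h
    push_neg at h
    have ht : ∀ t : ℝ, 0 < t → t * f c < u := by
      intro t ht
      have hm : (t • c) ∈ S := (hC.toCone C).smul_mem ht (hCS hc)
      have := hfu _ (subset_closure hm)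
      simpa [_root_.map_smul] using this
    have := ht ((u + 1) / f c) (by positivity)
    rw [div_mul_cancel₀ _ h.ne'] at this
    linarith
  refine ⟨fun j => -f (Pi.single j 1), ?_, ?_⟩
  · intro hφ
    have hf0 : ∀ v : d → ℝ, f v = 0 := by
      intro v
      rw [clm_decomp]
      apply Finset.sum_eq_zero
      intro j _
      have hj : -f (Pi.single j 1) = 0 := congrFun hφ j
      simp [neg_eq_zero.1 hj]
    rw [hf0 z] at huz
    linarith
  · intro c hc
    have hfc := hfC c hc
    rw [clm_decomp] at hfc
    have he : ∑ j, (fun j => -f (Pi.single j 1)) j * c j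
        = -∑ j, c j * f (Pi.single j 1) := by
      rw [← Finset.sum_neg_distrib]
      exact Finset.sum_congr rfl fun j _ => by ring
    rw [he]
    linarith

lemma convex_combo_set {Ω : Type*} {V : Type*} [AddCommGroup V] [Module ℝ V] (Φ : Ω → V) :
    Convex ℝ {v : V | ∃ (m : ℕ) (pts : Fin m → Ω) (wt : Fin m → ℝ),
      (∀ k, 0 ≤ wt k) ∧ (∑ k, wt k = 1) ∧ v = ∑ k, wt k • Φ (pts k)} := by
  rintro x ⟨m₁, p₁, w₁, hw₁, hs₁, rfl⟩ y ⟨m₂, p₂, w₂, hw₂, hs₂, rfl⟩ a b ha hb hab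
  refine ⟨m₁ + m₂, Fin.append p₁ p₂,
    Fin.append (fun k => a * w₁ k) (fun k => b * w₂ k), ?_, ?_, ?_⟩
  · intro k
    refine Fin.addCases (fun i => ?_) (fun i => ?_) k
    · rw [Fin.append_left]; exact mul_nonneg ha (hw₁ i)
    · rw [Fin.append_right]; exact mul_nonneg hb (hw₂ i)
  · rw [Fin.sum_univ_add]
    simp only [Fin.append_left, Fin.append_right, ← Finset.mul_sum, hs₁, hs₂]
    simpa using hab
  · rw [Fin.sum_univ_add]
    simp only [Fin.append_left, Fin.append_right]
    rw [Finset.smul_sum, Finset.smul_sum]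
    congr 1 <;> exact Finset.sum_congr rfl fun k _ => by simp [smul_smul]


lemma GCL {Ω : Type*} : ∀ (n : ℕ) (w : Fin n → Ω → ℝ) (E : Set (Fin n)) (g : Ω → ℝ),
    (∀ α : Fin n → ℝ, (∀ j, j ∉ E → 0 ≤ α j) →
        (∀ ω, 0 ≤ ∑ j, α j * w j ω) → ∀ ω, ∑ j, α j * w j ω = 0) →
    (∀ α : Fin n → ℝ, (∀ j, j ∉ E → 0 ≤ α j) → ∃ ω, ∑ j, α j * w j ω < g ω) →
    ∃ (m : ℕ) (pts : Fin m → Ω) (wt : Fin m → ℝ),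
      (∀ k, 0 ≤ wt k) ∧ (∑ k, wt k = 1) ∧
      (∀ j, ∑ k, wt k * w j (pts k) ≤ 0) ∧
      (∀ j, j ∈ E → ∑ k, wt k * w j (pts k) = 0) ∧
      0 ≤ ∑ k, wt k * g (pts k) := by
  intro n
  induction n with
  | zero =>
    intro w E g _ H
    obtain ⟨ω₀, hω₀⟩ := H 0 (fun j _ => le_refl 0)
    simp only [Finset.univ_eq_empty, Finset.sum_empty] at hω₀
    refine ⟨1, fun _ => ω₀, fun _ => 1, fun k => zero_le_one, by simp, ?_, ?_, by simpa using hω₀.le⟩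
    · exact fun j => j.elim0
    · exact fun j => j.elim0
  | succ n IH =>
    intro w E g NA H
    classical
    obtain ⟨ω₀, hω₀⟩ := H 0 (fun j _ => le_refl 0)
    simp only [Pi.zero_apply, zero_mul, Finset.sum_const_zero] at hω₀
    set d := Option (Fin (n + 1))
    set Φ : Ω → (d → ℝ) := fun ω j => j.elim (g ω) (fun i => w i ω) with hΦ
    set A : Set (d → ℝ) := {v | ∃ (m : ℕ) (pts : Fin m → Ω) (wt : Fin m → ℝ),
      (∀ k, 0 ≤ wt k) ∧ (∑ k, wt k = 1) ∧ v = ∑ k, wt k • Φ (pts k)} with hA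
    set K : Set (d → ℝ) := {v | (∀ j, j ∉ E → v (some j) ≤ 0) ∧
      (∀ j, j ∈ E → v (some j) = 0) ∧ 0 ≤ v none} with hK
    have hAconv : Convex ℝ A := convex_combo_set Φ
    have hKconv : Convex ℝ K := by
      rintro x ⟨hx1, hx2, hx3⟩ y ⟨hy1, hy2, hy3⟩ a b ha hb hab
      refine ⟨fun j hj => ?_, fun j hj => ?_, ?_⟩
      · have := hx1 j hj; have := hy1 j hj
        simp only [Pi.add_apply, Pi.smul_apply, smul_eq_mul]
        nlinarith
      · have := hx2 j hj; have := hy2 j hj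
        simp only [Pi.add_apply, Pi.smul_apply, smul_eq_mul]
        rw [this]; rw [hx2 j hj]; ring
      · simp only [Pi.add_apply, Pi.smul_apply, smul_eq_mul]
        nlinarith
    have hKsmul : ∀ (t : ℝ), 0 ≤ t → ∀ v ∈ K, t • v ∈ K := by
      rintro t ht v ⟨h1, h2, h3⟩
      refine ⟨fun j hj => ?_, fun j hj => ?_, ?_⟩
      · have := h1 j hj
        simp only [Pi.smul_apply, smul_eq_mul]
        exact mul_nonpos_of_nonneg_of_nonpos ht this
      · simp [Pi.smul_apply, h2 j hj]
      · simpa using mul_nonneg ht h3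
    have hΦA : ∀ ω, Φ ω ∈ A := by
      intro ω
      exact ⟨1, fun _ => ω, fun _ => 1, fun _ => zero_le_one, by simp, by simp⟩
    have h0K : (0 : d → ℝ) ∈ K := ⟨fun j _ => le_refl 0, fun j _ => rfl, le_refl 0⟩
    by_cases hmem : (0 : d → ℝ) ∈ A - K
    · obtain ⟨a, ha, kv, hkv, hak⟩ := Set.mem_sub.1 hmem
      have hak' : a = kv := sub_eq_zero.1 hak
      obtain ⟨m, pts, wt, hwt0, hwt1, hv⟩ := ha
      have coordeq : ∀ j : d, kv j = ∑ k, wt k * (Φ (pts k)) j := by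
        intro j
        rw [← hak', hv, Finset.sum_apply]
        exact Finset.sum_congr rfl fun k _ => by simp
      obtain ⟨hk1, hk2, hk3⟩ := hkv
      have hcw : ∀ j, ∑ k, wt k * w j (pts k) = kv (some j) := fun j => (coordeq (some j)).symm
      have hcg : ∑ k, wt k * g (pts k) = kv none := (coordeq none).symm
      refine ⟨m, pts, wt, hwt0, hwt1, fun j => ?_, fun j hj => ?_, ?_⟩
      · by_cases hj : j ∈ E
        · rw [hcw j, hk2 j hj]
        · rw [hcw j]; exact hk1 j hj
      · rw [hcw j]; exact hk2 j hj
      · rw [hcg]; exact hk3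
    · have hCconv : Convex ℝ (A - K) := hAconv.sub hKconv
      have hCne : (A - K).Nonempty := ⟨Φ ω₀ - 0, Set.sub_mem_sub (hΦA ω₀) h0K⟩
      obtain ⟨φ, hφne, hφ⟩ := sep_lemma hCconv hCne hmem
      set α : Fin (n + 1) → ℝ := fun i => φ (some i) with hα
      set β : ℝ := φ none with hβ
      -- φ is nonpositive on K
      have hnum : 0 ≤ ∑ j, φ j * Φ ω₀ j := by
        have := hφ _ (Set.sub_mem_sub (hΦA ω₀) h0K)
        simpa using this
      have hKle : ∀ v ∈ K, ∑ j, φ j * v j ≤ 0 := by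
        intro v hv
        by_contra hcon
        push_neg at hcon
        have ht : ∀ t : ℝ, 0 ≤ t →
            0 ≤ ∑ j, φ j * (Φ ω₀ j) - t * ∑ j, φ j * v j := by
          intro t ht
          have hmem' : Φ ω₀ - t • v ∈ A - K :=
            Set.sub_mem_sub (hΦA ω₀) (hKsmul t ht v hv)
          have := hφ _ hmem'
          calc (0:ℝ) ≤ ∑ j, φ j * (Φ ω₀ - t • v) j := this
            _ = ∑ j, (φ j * Φ ω₀ j - t * (φ j * v j)) := by
                refine Finset.sum_congr rfl fun j _ => ?_
                simp [Pi.sub_apply, Pi.smul_apply, smul_eq_mul]; ring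
            _ = ∑ j, φ j * (Φ ω₀ j) - t * ∑ j, φ j * v j := by
                rw [Finset.sum_sub_distrib, Finset.mul_sum]
        have h2 := ht ((∑ j, φ j * (Φ ω₀ j) + 1) / (∑ j, φ j * v j)) (div_nonneg (by linarith) hcon.le)
        rw [div_mul_eq_mul_div, mul_div_assoc, div_self hcon.ne', mul_one] at h2
        linarith
      have hsingle : ∀ (j₀ : d) (c : ℝ), ∑ j, φ j * (Pi.single j₀ c : d → ℝ) j = φ j₀ * c := by
        intro j₀ c
        rw [Finset.sum_eq_single j₀]
        · simp
        · intro b _ hb; simp [Pi.single_apply, hb]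
        · intro hb; exact absurd (Finset.mem_univ j₀) hb
      have hα0 : ∀ j, j ∉ E → 0 ≤ α j := by
        intro j hj
        have hmemK : (Pi.single (some j) (-1) : d → ℝ) ∈ K := by
          refine ⟨fun j' hj' => ?_, fun j' hj' => ?_, ?_⟩
          · by_cases h : j' = j
            · subst h; simp
            · have hne : (some j' : d) ≠ some j := by simpa using h
              rw [Pi.single_eq_of_ne hne]
          · have h : j' ≠ j := fun h => hj (h ▸ hj')
            have hne : (some j' : d) ≠ some j := by simpa using h
            rw [Pi.single_eq_of_ne hne]
          · rw [Pi.single_eq_of_ne (by simp : (none : d) ≠ some j)]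
        have := hKle _ hmemK
        rw [hsingle] at this
        have : 0 ≤ φ (some j) := by linarith
        simpa [hα] using this
      have hβ0 : β ≤ 0 := by
        have hmemK : (Pi.single (none : d) (1:ℝ) : d → ℝ) ∈ K := by
          refine ⟨fun j' _ => ?_, fun j' _ => ?_, ?_⟩
          · simp [Pi.single_apply]
          · simp [Pi.single_apply]
          · simp
        have := hKle _ hmemK
        rw [hsingle] at this
        simpa [hβ] using this
      have F1 : ∀ ω, 0 ≤ β * g ω + ∑ i, α i * w i ω := by
        intro ω
        have hmem' : Φ ω - 0 ∈ A - K := Set.sub_mem_sub (hΦA ω) h0K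
        have := hφ _ hmem'
        rw [sub_zero] at this
        calc (0:ℝ) ≤ ∑ j, φ j * Φ ω j := this
          _ = β * g ω + ∑ i, α i * w i ω := by
              rw [Fintype.sum_option]
              rfl
      rcases lt_or_eq_of_le hβ0 with hβneg | hβzero
      · -- β < 0 : contradiction with H
        exfalso
        set α' : Fin (n+1) → ℝ := fun i => α i / (-β) with hα'
        obtain ⟨ω, hω⟩ := H α' (fun j hj => div_nonneg (hα0 j hj) (by linarith))
        have h1 := F1 ω
        have h2 : ∑ i, α' i * w i ω = (∑ i, α i * w i ω) / (-β) := by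
          rw [Finset.sum_div]
          exact Finset.sum_congr rfl fun i _ => by rw [hα']; ring
        rw [h2] at hω
        have h3 : (∑ i, α i * w i ω) / (-β) ≥ g ω := by
          rw [ge_iff_le, le_div_iff₀ (by linarith : (0:ℝ) < -β)]
          nlinarith
        linarith
      · -- β = 0 : degenerate direction, use NA and induction
        have hαpos : ∀ ω, 0 ≤ ∑ i, α i * w i ω := by
          intro ω
          have h1 := F1 ω
          rw [hβzero, zero_mul, zero_add] at h1
          exact h1
        have hαzero : ∀ ω, ∑ i, α i * w i ω = 0 := NA α hα0 hαpos
        obtain ⟨i, hi⟩ : ∃ i, α i ≠ 0 := by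
          by_contra hc
          push_neg at hc
          apply hφne
          funext j
          show φ j = 0
          cases j with
          | none => exact hβzero
          | some i => exact hc i
        set w' : Fin n → Ω → ℝ := fun j => w (i.succAbove j) with hw'
        set E' : Set (Fin n) := {j | i.succAbove j ∈ E ∨ α (i.succAbove j) ≠ 0} with hE'
        have hsum_ext : ∀ (α' : Fin n → ℝ) (ω : Ω),
            ∑ j, (i.insertNth (0:ℝ) α' : Fin (n+1) → ℝ) j * w j ω = ∑ j, α' j * w' j ω := by
          intro α' ω
          rw [Fin.sum_univ_succAbove _ i]
          rw [Fin.insertNth_apply_same, zero_mul, zero_add]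
          exact Finset.sum_congr rfl fun j _ => by rw [Fin.insertNth_apply_succAbove]
        have shift : ∀ α' : Fin n → ℝ, (∀ j, j ∉ E' → 0 ≤ α' j) →
            ∃ β' : Fin (n+1) → ℝ, (∀ j, j ∉ E → 0 ≤ β' j) ∧
              ∀ ω, ∑ j, β' j * w j ω = ∑ j, α' j * w' j ω := by
          intro α' hα'
          set a : Fin (n+1) → ℝ := (i.insertNth (0:ℝ) α' : Fin (n+1) → ℝ) with ha
          set t : ℝ := max 0
            (Finset.univ.sup' Finset.univ_nonempty (fun j : Fin (n+1) => -a j / α j)) with htdef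
          have ht0 : (0:ℝ) ≤ t := le_max_left _ _
          refine ⟨fun j => a j + t * α j, ?_, ?_⟩
          · intro j hj
            show 0 ≤ a j + t * α j
            by_cases hαj : α j = 0
            · have haj : 0 ≤ a j := by
                by_cases hji : j = i
                · subst hji; rw [ha]; simp [Fin.insertNth_apply_same]
                · obtain ⟨j', hj'⟩ := Fin.exists_succAbove_eq hji
                  have hjE' : j' ∉ E' := by
                    intro hmem'
                    rcases hmem' with h | h
                    · rw [hj'] at h; exact hj h
                    · rw [hj'] at h; exact h hαj
                  have h2 := hα' j' hjE'
                  rw [ha, ← hj', Fin.insertNth_apply_succAbove]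
                  exact h2
              rw [hαj, mul_zero, add_zero]
              exact haj
            · have hαjpos : 0 < α j := lt_of_le_of_ne (hα0 j hj) (Ne.symm hαj)
              have h1 : -a j / α j ≤ t :=
                le_trans (Finset.le_sup' (f := fun j : Fin (n+1) => -a j / α j)
                  (Finset.mem_univ j)) (le_max_right _ _)
              rw [div_le_iff₀ hαjpos] at h1
              linarith
          · intro ω
            have hsplit : ∑ j, (a j + t * α j) * w j ω
                = ∑ j, a j * w j ω + t * ∑ j, α j * w j ω := by
              rw [Finset.mul_sum, ← Finset.sum_add_distrib]
              exact Finset.sum_congr rfl fun j _ => by ring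
            rw [hsplit, hαzero ω, mul_zero, add_zero, ha, hsum_ext]
        have NA' : ∀ α' : Fin n → ℝ, (∀ j, j ∉ E' → 0 ≤ α' j) →
            (∀ ω, 0 ≤ ∑ j, α' j * w' j ω) → ∀ ω, ∑ j, α' j * w' j ω = 0 := by
          intro α' hadm hpos ω
          obtain ⟨β', hβ'adm, hβ'sum⟩ := shift α' hadm
          have h2 := NA β' hβ'adm (fun ω' => (hβ'sum ω') ▸ hpos ω')
          rw [← hβ'sum ω]
          exact h2 ω
        have H' : ∀ α' : Fin n → ℝ, (∀ j, j ∉ E' → 0 ≤ α' j) →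
            ∃ ω, ∑ j, α' j * w' j ω < g ω := by
          intro α' hadm
          obtain ⟨β', hβ'adm, hβ'sum⟩ := shift α' hadm
          obtain ⟨ω, hω⟩ := H β' hβ'adm
          exact ⟨ω, (hβ'sum ω) ▸ hω⟩
        obtain ⟨m, pts, wt, hwt0, hwt1, hle, heq, hg⟩ := IH w' E' g NA' H'
        have key0 : ∀ j : Fin (n+1), j ≠ i → α j ≠ 0 →
            ∑ k, wt k * w j (pts k) = 0 := by
          intro j hji hαj
          obtain ⟨j', hj'⟩ := Fin.exists_succAbove_eq hji
          have hmemE' : j' ∈ E' := Or.inr (by rw [hj']; exact hαj)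
          have h2 := heq j' hmemE'
          rw [← hj']
          exact h2
        have keyswap : ∑ j, α j * ∑ k, wt k * w j (pts k) = 0 := by
          calc ∑ j, α j * ∑ k, wt k * w j (pts k)
              = ∑ j, ∑ k, α j * (wt k * w j (pts k)) := by
                exact Finset.sum_congr rfl fun j _ => Finset.mul_sum _ _ _
            _ = ∑ k, ∑ j, α j * (wt k * w j (pts k)) := Finset.sum_comm
            _ = ∑ k, wt k * ∑ j, α j * w j (pts k) := by
                refine Finset.sum_congr rfl fun k _ => ?_
                rw [Finset.mul_sum]
                exact Finset.sum_congr rfl fun j _ => by ring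
            _ = 0 := by simp [hαzero]
        have keyi : ∑ k, wt k * w i (pts k) = 0 := by
          rw [Fin.sum_univ_succAbove (fun j => α j * ∑ k, wt k * w j (pts k)) i] at keyswap
          have hrest : ∑ j' : Fin n,
              α (i.succAbove j') * ∑ k, wt k * w (i.succAbove j') (pts k) = 0 :=
            Finset.sum_eq_zero fun j' _ => by
              by_cases h : α (i.succAbove j') = 0
              · rw [h, zero_mul]
              · rw [key0 _ (Fin.succAbove_ne i j') h, mul_zero]
          rw [hrest, add_zero] at keyswap
          rcases mul_eq_zero.1 keyswap with h | h
          · exact absurd h hi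
          · exact h
        refine ⟨m, pts, wt, hwt0, hwt1, fun j => ?_, fun j hjE => ?_, hg⟩
        · by_cases hji : j = i
          · subst hji; rw [keyi]
          · by_cases h : α j = 0
            · obtain ⟨j', hj'⟩ := Fin.exists_succAbove_eq hji
              rw [← hj']
              exact hle j'
            · rw [key0 j hji h]
        · by_cases hji : j = i
          · subst hji; exact keyi
          · obtain ⟨j', hj'⟩ := Fin.exists_succAbove_eq hji
            have hmemE' : j' ∈ E' := Or.inl (by rw [hj']; exact hjE)
            rw [← hj']
            exact heq j' hmemE'

lemma ATT {Ω : Type*} : ∀ (n : ℕ) (w : Fin n → Ω → ℝ) (f : Ω → ℝ),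
    (∀ α : Fin n → ℝ, (∀ i, 0 ≤ α i) → (∀ ω, 0 ≤ ∑ i, α i * w i ω) →
      ∀ ω, ∑ i, α i * w i ω = 0) →
    ∀ (p : ℝ) (x : ℕ → ℝ), Tendsto x atTop (nhds p) →
    (∀ k, ∃ α : Fin n → ℝ, (∀ i, 0 ≤ α i) ∧ ∀ ω, f ω ≤ x k + ∑ i, α i * w i ω) →
    ∃ α : Fin n → ℝ, (∀ i, 0 ≤ α i) ∧ ∀ ω, f ω ≤ p + ∑ i, α i * w i ω := by
  intro n
  induction n with
  | zero =>
    intro w f NA p x hx hfeas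
    refine ⟨0, fun i => le_refl 0, fun ω => ?_⟩
    simp only [Finset.univ_eq_empty, Finset.sum_empty, add_zero]
    have hk : ∀ k, f ω ≤ x k := fun k => by
      obtain ⟨α, _, hα⟩ := hfeas k
      simpa using hα ω
    exact ge_of_tendsto hx (Eventually.of_forall hk)
  | succ n IH =>
    intro w f NA p x hx hfeas
    classical
    choose A hA0 hAle using hfeas
    by_cases hb : ∃ R : ℝ, ∃ᶠ k in atTop, A k ∈ Metric.closedBall (0 : Fin (n+1) → ℝ) R
    · obtain ⟨R, hR⟩ := hb
      obtain ⟨α, -, ψ, hψmono, hψlim⟩ :=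
        tendsto_subseq_of_frequently_bounded Metric.isBounded_closedBall hR
      refine ⟨α, fun i => ?_, fun ω => ?_⟩
      · have hcoord : Tendsto (fun k => A (ψ k) i) atTop (nhds (α i)) :=
          ((continuous_apply i).tendsto α).comp hψlim
        exact ge_of_tendsto hcoord (Eventually.of_forall fun k => hA0 _ i)
      · have hlim : Tendsto (fun k => x (ψ k) + ∑ i, A (ψ k) i * w i ω) atTop
            (nhds (p + ∑ i, α i * w i ω)) := by
          refine Tendsto.add (hx.comp hψmono.tendsto_atTop) ?_
          refine tendsto_finset_sum _ fun i _ => ?_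
          exact (((continuous_apply i).tendsto α).comp hψlim).mul tendsto_const_nhds
        exact ge_of_tendsto hlim (Eventually.of_forall fun k => hAle (ψ k) ω)
    · push_neg at hb
      have hnorm : Tendsto (fun k => ‖A k‖) atTop atTop := by
        rw [tendsto_atTop]
        intro R
        have h1 := hb R
        filter_upwards [h1] with k hk
        simp only [Metric.mem_closedBall, dist_zero_right, not_le] at hk
        linarith
      have hevpos : ∀ᶠ k in atTop, 0 < ‖A k‖ := hnorm.eventually_gt_atTop 0
      set B : ℕ → Fin (n+1) → ℝ := fun k => ‖A k‖⁻¹ • A k with hB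
      have hBnorm : ∀ k, 0 < ‖A k‖ → ‖B k‖ = 1 := by
        intro k hk
        rw [hB]
        simp only [norm_smul, norm_inv, norm_norm]
        exact inv_mul_cancel₀ hk.ne'
      have hBball : ∀ᶠ k in atTop, B k ∈ Metric.closedBall (0 : Fin (n+1) → ℝ) 1 := by
        filter_upwards [hevpos] with k hk
        simp only [Metric.mem_closedBall, dist_zero_right]
        rw [hBnorm k hk]
      obtain ⟨αs, -, ψ, hψmono, hψlim⟩ :=
        tendsto_subseq_of_frequently_bounded Metric.isBounded_closedBall hBball.frequently
      have hψnorm : Tendsto (fun k => ‖A (ψ k)‖) atTop atTop := hnorm.comp hψmono.tendsto_atTop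
      have hψevpos : ∀ᶠ k in atTop, 0 < ‖A (ψ k)‖ := hψnorm.eventually_gt_atTop 0
      have hαs0 : ∀ i, 0 ≤ αs i := by
        intro i
        have hcoord : Tendsto (fun k => B (ψ k) i) atTop (nhds (αs i)) :=
          ((continuous_apply i).tendsto αs).comp hψlim
        refine ge_of_tendsto hcoord (Eventually.of_forall fun k => ?_)
        simp only [hB, Pi.smul_apply, smul_eq_mul]
        exact mul_nonneg (inv_nonneg.2 (norm_nonneg _)) (hA0 _ i)
      have hαsnorm : ‖αs‖ = 1 := by
        have h1 : Tendsto (fun k => ‖B (ψ k)‖) atTop (nhds ‖αs‖) := hψlim.norm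
        have h2 : (fun k => ‖B (ψ k)‖) =ᶠ[atTop] (fun _ => (1:ℝ)) := by
          filter_upwards [hψevpos] with k hk
          exact hBnorm _ hk
        have h3 : Tendsto (fun _ : ℕ => (1:ℝ)) atTop (nhds ‖αs‖) := h1.congr' h2
        exact tendsto_nhds_unique h3 tendsto_const_nhds
      have hαsw : ∀ ω, 0 ≤ ∑ i, αs i * w i ω := by
        intro ω
        have key : ∀ᶠ k in atTop,
            (f ω - x (ψ k)) * ‖A (ψ k)‖⁻¹ ≤ ∑ i, B (ψ k) i * w i ω := by
          filter_upwards [hψevpos] with k hk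
          have h1 := hAle (ψ k) ω
          have h2 : ∑ i, B (ψ k) i * w i ω = (∑ i, A (ψ k) i * w i ω) * ‖A (ψ k)‖⁻¹ := by
            rw [Finset.sum_mul]
            refine Finset.sum_congr rfl fun i _ => ?_
            simp only [hB, Pi.smul_apply, smul_eq_mul]
            ring
          rw [h2]
          exact mul_le_mul_of_nonneg_right (by linarith) (inv_nonneg.2 (norm_nonneg _))
        have hlhs : Tendsto (fun k => (f ω - x (ψ k)) * ‖A (ψ k)‖⁻¹) atTop (nhds 0) := by
          have h3 : Tendsto (fun k => f ω - x (ψ k)) atTop (nhds (f ω - p)) :=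
            tendsto_const_nhds.sub (hx.comp hψmono.tendsto_atTop)
          have h4 : Tendsto (fun k => ‖A (ψ k)‖⁻¹) atTop (nhds 0) :=
            hψnorm.inv_tendsto_atTop
          simpa using h3.mul h4
        have hrhs : Tendsto (fun k => ∑ i, B (ψ k) i * w i ω) atTop
            (nhds (∑ i, αs i * w i ω)) := by
          refine tendsto_finset_sum _ fun i _ => ?_
          exact (((continuous_apply i).tendsto αs).comp hψlim).mul tendsto_const_nhds
        exact le_of_tendsto_of_tendsto hlhs hrhs key
      have hαszero := NA αs hαs0 hαsw
      obtain ⟨i0, hi0⟩ : ∃ i, 0 < αs i := by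
        by_contra hcon
        push_neg at hcon
        have hz : αs = 0 := funext fun i => le_antisymm (hcon i) (hαs0 i)
        rw [hz] at hαsnorm
        simp at hαsnorm
      set Spos : Finset (Fin (n+1)) := Finset.univ.filter (fun j => 0 < αs j) with hSpos
      have hSne : Spos.Nonempty := ⟨i0, by simp [hSpos, hi0]⟩
      set T : ℕ → ℝ := fun k => Spos.inf' hSne (fun j => A k j / αs j) with hT
      have hcex : ∀ k, ∃ j ∈ Spos, T k = A k j / αs j := fun k =>
        Finset.exists_mem_eq_inf' hSne _
      choose c hcS hcT using hcex
      obtain ⟨i1, hi1⟩ : ∃ i1 : Fin (n+1), ∃ᶠ k in atTop, c k = i1 := by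
        by_contra hcon
        push_neg at hcon
        have hall : ∀ᶠ k in atTop, ∀ i1, c k ≠ i1 := eventually_all.2 hcon
        obtain ⟨k, hk⟩ := hall.exists
        exact hk (c k) rfl
      obtain ⟨φ3, hφ3mono, hφ3⟩ := extraction_of_frequently_atTop hi1
      have hi1S : i1 ∈ Spos := hφ3 0 ▸ hcS (φ3 0)
      have hi1pos : 0 < αs i1 := by
        have := hi1S
        rw [hSpos, Finset.mem_filter] at this
        exact this.2
      have hT0 : ∀ k, 0 ≤ T k := by
        intro k
        refine Finset.le_inf' hSne _ fun j hj => ?_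
        rw [hSpos, Finset.mem_filter] at hj
        exact div_nonneg (hA0 k j) hj.2.le
      set A' : ℕ → Fin (n+1) → ℝ := fun k => A (φ3 k) - T (φ3 k) • αs with hA'
      have hA'0 : ∀ k j, 0 ≤ A' k j := by
        intro k j
        by_cases hj : 0 < αs j
        · have hjS : j ∈ Spos := by simp [hSpos, hj]
          have hle : T (φ3 k) ≤ A (φ3 k) j / αs j := Finset.inf'_le _ hjS
          rw [le_div_iff₀ hj] at hle
          simp only [hA', Pi.sub_apply, Pi.smul_apply, smul_eq_mul]
          linarith
        · have hz : αs j = 0 := le_antisymm (not_lt.1 hj) (hαs0 j)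
          simp only [hA', Pi.sub_apply, Pi.smul_apply, smul_eq_mul, hz, mul_zero, sub_zero]
          exact hA0 _ j
      have hA'i1 : ∀ k, A' k i1 = 0 := by
        intro k
        simp only [hA', Pi.sub_apply, Pi.smul_apply, smul_eq_mul]
        rw [show T (φ3 k) = A (φ3 k) (c (φ3 k)) / αs (c (φ3 k)) from hcT (φ3 k), hφ3 k]
        rw [div_mul_cancel₀ _ hi1pos.ne']
        ring
      have hA'sum : ∀ k ω, ∑ j, A' k j * w j ω = ∑ j, A (φ3 k) j * w j ω := by
        intro k ω
        have hsplit : ∑ j, A' k j * w j ω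
            = ∑ j, A (φ3 k) j * w j ω - T (φ3 k) * ∑ j, αs j * w j ω := by
          rw [Finset.mul_sum, ← Finset.sum_sub_distrib]
          refine Finset.sum_congr rfl fun j _ => ?_
          simp only [hA', Pi.sub_apply, Pi.smul_apply, smul_eq_mul]
          ring
        rw [hsplit, hαszero ω, mul_zero, sub_zero]
      -- reduce to n assets dropping i1
      set w' : Fin n → Ω → ℝ := fun j => w (i1.succAbove j) with hw'
      have hsum_ext : ∀ (α' : Fin n → ℝ) (ω : Ω),
          ∑ j, (i1.insertNth (0:ℝ) α' : Fin (n+1) → ℝ) j * w j ω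
            = ∑ j, α' j * w' j ω := by
        intro α' ω
        rw [Fin.sum_univ_succAbove _ i1, Fin.insertNth_apply_same, zero_mul, zero_add]
        exact Finset.sum_congr rfl fun j _ => by rw [Fin.insertNth_apply_succAbove]
      have NA' : ∀ α' : Fin n → ℝ, (∀ i, 0 ≤ α' i) →
          (∀ ω, 0 ≤ ∑ j, α' j * w' j ω) → ∀ ω, ∑ j, α' j * w' j ω = 0 := by
        intro α' hadm hpos ω
        have hadm2 : ∀ j, 0 ≤ (i1.insertNth (0:ℝ) α' : Fin (n+1) → ℝ) j := by
          intro j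
          by_cases hji : j = i1
          · subst hji; rw [Fin.insertNth_apply_same]
          · obtain ⟨j', hj'⟩ := Fin.exists_succAbove_eq hji
            rw [← hj', Fin.insertNth_apply_succAbove]
            exact hadm j'
        have h2 := NA _ hadm2 (fun ω' => (hsum_ext α' ω') ▸ hpos ω')
        rw [← hsum_ext α' ω]
        exact h2 ω
      have hfeas' : ∀ k, ∃ α' : Fin n → ℝ, (∀ i, 0 ≤ α' i) ∧
          ∀ ω, f ω ≤ (x ∘ φ3) k + ∑ j, α' j * w' j ω := by
        intro k
        refine ⟨fun j => A' k (i1.succAbove j), fun j => hA'0 k _, fun ω => ?_⟩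
        have h1 := hAle (φ3 k) ω
        have h2 : ∑ j, A' k (i1.succAbove j) * w' j ω = ∑ j, A (φ3 k) j * w j ω := by
          rw [← hA'sum k ω, Fin.sum_univ_succAbove (fun j => A' k j * w j ω) i1,
            hA'i1 k, zero_mul, zero_add]
        rw [Function.comp_apply, h2]
        exact h1
      obtain ⟨α', hα'0, hα'le⟩ := IH w' f NA' p (x ∘ φ3) (hx.comp hφ3mono.tendsto_atTop) hfeas'
      refine ⟨(i1.insertNth (0:ℝ) α' : Fin (n+1) → ℝ), fun j => ?_, fun ω => ?_⟩
      · by_cases hji : j = i1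
        · subst hji; rw [Fin.insertNth_apply_same]
        · obtain ⟨j', hj'⟩ := Fin.exists_succAbove_eq hji
          rw [← hj', Fin.insertNth_apply_succAbove]
          exact hα'0 j'
      · rw [hsum_ext α' ω]
        exact hα'le ω

lemma finite_dirac_measure {Ω : Type*} [MeasurableSpace Ω] (m : ℕ) (pts : Fin m → Ω)
    (wt : Fin m → ℝ) (hwt0 : ∀ k, 0 ≤ wt k) (hwt1 : ∑ k, wt k = 1) :
    ∃ π : Measure Ω, IsProbabilityMeasure π ∧
      ∀ h : Ω → ℝ, Measurable h →
        (Integrable h π ∧ ∫ ω, h ω ∂π = ∑ k, wt k * h (pts k)) := by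
  refine ⟨∑ k, ENNReal.ofReal (wt k) • Measure.dirac (pts k), ?_, ?_⟩
  · constructor
    rw [Measure.finset_sum_apply]
    have : ∀ k : Fin m, (ENNReal.ofReal (wt k) • Measure.dirac (pts k)) univ
        = ENNReal.ofReal (wt k) := by
      intro k
      simp [Measure.smul_apply]
    rw [Finset.sum_congr rfl fun k _ => this k,
      ← ENNReal.ofReal_sum_of_nonneg (fun k _ => hwt0 k), hwt1, ENNReal.ofReal_one]
  · intro h hm
    have hint : ∀ k : Fin m, Integrable h (ENNReal.ofReal (wt k) • Measure.dirac (pts k)) := by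
      intro k
      refine Integrable.smul_measure ?_ ENNReal.ofReal_ne_top
      refine ⟨hm.aestronglyMeasurable, ?_⟩
      rw [HasFiniteIntegral, lintegral_dirac' _ hm.enorm]
      exact ENNReal.coe_lt_top
    constructor
    · exact integrable_finset_sum_measure.2 (fun k _ => hint k)
    · rw [integral_finset_sum_measure (fun k _ => hint k)]
      refine Finset.sum_congr rfl fun k _ => ?_
      rw [integral_smul_measure, integral_dirac' _ _ hm.stronglyMeasurable]
      simp [ENNReal.toReal_ofReal (hwt0 k), smul_eq_mul]

/-- Auxiliary finite-dimensional duality (Lemma on the space of measurable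
functions): under the no-arbitrage-type condition on `w`, the supremum of `∫ f dπ`
over the "supermartingale measures" `Π` equals the cheapest superhedging constant
using the payoffs `w`, and the infimum is attained whenever it is finite. -/
theorem abstract_superhedging_duality {Ω : Type*} [MeasurableSpace Ω] (n : ℕ)
    (w : Fin n → Ω → ℝ) (hw : ∀ i, Measurable (w i))
    (hNA : ∀ α : Fin n → ℝ, (∀ i, 0 ≤ α i) →
      (∀ ω, 0 ≤ ∑ i, α i * w i ω) → ∀ ω, ∑ i, α i * w i ω = 0)
    (f : Ω → ℝ) (hf : Measurable f)
    (hf_int : ∀ π : Measure Ω, IsProbabilityMeasure π →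
      ((∀ i, Integrable (w i) π) ∧ ∀ i, (∫ ω, w i ω ∂π) ≤ 0) → Integrable f π) :
    (sSup {y : EReal | ∃ π : Measure Ω, IsProbabilityMeasure π ∧
        ((∀ i, Integrable (w i) π) ∧ ∀ i, (∫ ω, w i ω ∂π) ≤ 0) ∧
        y = ((∫ ω, f ω ∂π : ℝ) : EReal)}
      = sInf {y : EReal | ∃ x : ℝ, (∃ α : Fin n → ℝ, (∀ i, 0 ≤ α i) ∧
          ∀ ω, f ω ≤ x + ∑ i, α i * w i ω) ∧ y = (x : EReal)}) ∧
    (({x : ℝ | ∃ α : Fin n → ℝ, (∀ i, 0 ≤ α i) ∧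
        ∀ ω, f ω ≤ x + ∑ i, α i * w i ω}.Nonempty →
      BddBelow {x : ℝ | ∃ α : Fin n → ℝ, (∀ i, 0 ≤ α i) ∧
        ∀ ω, f ω ≤ x + ∑ i, α i * w i ω} →
      sInf {x : ℝ | ∃ α : Fin n → ℝ, (∀ i, 0 ≤ α i) ∧
        ∀ ω, f ω ≤ x + ∑ i, α i * w i ω}
        ∈ {x : ℝ | ∃ α : Fin n → ℝ, (∀ i, 0 ≤ α i) ∧
        ∀ ω, f ω ≤ x + ∑ i, α i * w i ω})) := by
  classical
  set P : Set ℝ := {x : ℝ | ∃ α : Fin n → ℝ, (∀ i, 0 ≤ α i) ∧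
      ∀ ω, f ω ≤ x + ∑ i, α i * w i ω} with hP
  set S' : Set EReal := {y : EReal | ∃ π : Measure Ω, IsProbabilityMeasure π ∧
      ((∀ i, Integrable (w i) π) ∧ ∀ i, (∫ ω, w i ω ∂π) ≤ 0) ∧
      y = ((∫ ω, f ω ∂π : ℝ) : EReal)} with hS'
  set D' : Set EReal := {y : EReal | ∃ x : ℝ, x ∈ P ∧ y = (x : EReal)} with hD'
  constructor
  · -- equality of sup and inf
    show sSup S' = sInf D'
    have hle : sSup S' ≤ sInf D' := by
      refine sSup_le fun y hy => le_sInf fun z hz => ?_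
      obtain ⟨π, hπprob, ⟨hπw, hπwle⟩, rfl⟩ := hy
      obtain ⟨x, ⟨α, hα0, hαle⟩, rfl⟩ := hz
      rw [EReal.coe_le_coe_iff]
      have hfint : Integrable f π := hf_int π hπprob ⟨hπw, hπwle⟩
      have hgint : Integrable (fun ω => x + ∑ i, α i * w i ω) π := by
        refine (integrable_const x).add ?_
        exact integrable_finset_sum _ fun i _ => (hπw i).const_mul (α i)
      have h1 : ∫ ω, f ω ∂π ≤ ∫ ω, (x + ∑ i, α i * w i ω) ∂π :=
        integral_mono hfint hgint hαle
      have h2 : ∫ ω, (x + ∑ i, α i * w i ω) ∂π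
          = x + ∑ i, α i * ∫ ω, w i ω ∂π := by
        rw [integral_add (integrable_const x)
          (integrable_finset_sum _ fun i _ => (hπw i).const_mul (α i))]
        rw [integral_const]
        simp only [probReal_univ, measure_univ, ENNReal.toReal_one, one_smul]
        congr 1
        rw [integral_finset_sum _ fun i _ => (hπw i).const_mul (α i)]
        exact Finset.sum_congr rfl fun i _ => integral_const_mul (α i) (w i)
      have h3 : ∑ i, α i * ∫ ω, w i ω ∂π ≤ 0 :=
        Finset.sum_nonpos fun i _ => mul_nonpos_of_nonneg_of_nonpos (hα0 i) (hπwle i)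
      linarith
    refine le_antisymm hle (not_lt.1 fun hlt => ?_)
    obtain ⟨x, hx1, hx2⟩ := EReal.exists_between_coe_real hlt
    have hxP : x ∉ P := by
      intro hp
      have : sInf D' ≤ (x : EReal) := sInf_le ⟨x, hp, rfl⟩
      exact absurd (lt_of_le_of_lt this hx2) (lt_irrefl _)
    have H : ∀ α : Fin n → ℝ, (∀ j, j ∉ (∅ : Set (Fin n)) → 0 ≤ α j) →
        ∃ ω, ∑ j, α j * w j ω < f ω - x := by
      intro α hα
      have hxP' : ¬ ∃ α : Fin n → ℝ, (∀ i, 0 ≤ α i) ∧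
          ∀ ω, f ω ≤ x + ∑ i, α i * w i ω := hxP
      push_neg at hxP'
      obtain ⟨ω, hω⟩ := hxP' α (fun i => hα i (Set.notMem_empty i))
      exact ⟨ω, by linarith⟩
    have NA' : ∀ α : Fin n → ℝ, (∀ j, j ∉ (∅ : Set (Fin n)) → 0 ≤ α j) →
        (∀ ω, 0 ≤ ∑ j, α j * w j ω) → ∀ ω, ∑ j, α j * w j ω = 0 :=
      fun α hα => hNA α (fun i => hα i (Set.notMem_empty i))
    obtain ⟨m, pts, wt, h0, h1, h2, _, h4⟩ := GCL n w ∅ (fun ω => f ω - x) NA' H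
    obtain ⟨π, hπprob, hπint⟩ := finite_dirac_measure m pts wt h0 h1
    have hπw : ∀ i, Integrable (w i) π := fun i => (hπint (w i) (hw i)).1
    have hπwle : ∀ i, ∫ ω, w i ω ∂π ≤ 0 := fun i => by
      rw [(hπint (w i) (hw i)).2]; exact h2 i
    have hfval : ∫ ω, f ω ∂π = ∑ k, wt k * f (pts k) := (hπint f hf).2
    have hxle : x ≤ ∫ ω, f ω ∂π := by
      rw [hfval]
      have hexp : ∑ k, wt k * (f (pts k) - x) = ∑ k, wt k * f (pts k) - x := by
        have : ∑ k, wt k * (f (pts k) - x)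
            = ∑ k, wt k * f (pts k) - ∑ k, wt k * x := by
          rw [← Finset.sum_sub_distrib]
          exact Finset.sum_congr rfl fun k _ => by ring
        rw [this, ← Finset.sum_mul, h1, one_mul]
      have h4' := h4
      rw [hexp] at h4'
      linarith
    have hmem : ((∫ ω, f ω ∂π : ℝ) : EReal) ∈ S' := ⟨π, hπprob, ⟨hπw, hπwle⟩, rfl⟩
    have : (x : EReal) ≤ sSup S' :=
      le_trans (EReal.coe_le_coe_iff.2 hxle) (le_sSup hmem)
    exact absurd (lt_of_le_of_lt this hx1) (lt_irrefl _)
  · -- attainment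
    intro hne hbdd
    set p : ℝ := sInf P with hp
    have hseq : ∀ k : ℕ, ∃ xk ∈ P, xk < p + 1 / ((k : ℝ) + 1) :=
      fun k => Real.lt_sInf_add_pos hne (by positivity)
    choose xs hxsP hxslt using hseq
    have hxsge : ∀ k, p ≤ xs k := fun k => csInf_le hbdd (hxsP k)
    have hxs : Tendsto xs atTop (nhds p) := by
      have hup : Tendsto (fun k : ℕ => p + 1 / ((k : ℝ) + 1)) atTop (nhds p) := by
        have := tendsto_const_nhds (f := atTop (α := ℕ)) (x := p)
        have h2 := tendsto_one_div_add_atTop_nhds_zero_nat (𝕜 := ℝ)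
        simpa using this.add h2
      exact tendsto_of_tendsto_of_tendsto_of_le_of_le tendsto_const_nhds hup
        hxsge (fun k => (hxslt k).le)
    obtain ⟨α, hα0, hαle⟩ := ATT n w f hNA p xs hxs (fun k => hxsP k)
    exact ⟨α, hα0, hαle⟩

end
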